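/- Let G ∈ ℝ^{n×n} be symmetric positive semidefinite, s ≤ n, and let λ₁ ≥ λ₂ ≥ … ≥ λₙ ≥ 0 be the eigenvalues of G ordered decreasingly. Then the infimum over H ∈ ℝ^{n×s} of the dual KPCA objective (1/2) Tr(Hᵀ H) − Tr √(Hᵀ G H) equals −(1/2) Σ_{i=1}^s λᵢ, and it is attained at H^svd, the matrix whose j-th column is √(λⱼ) uⱼ where u₁,…,uₛ are orthonormal eigenvectors of G associated to the s largest eigenvalues λ₁,…,λₛ. -/

import Mathlib

open scoped Matrix

namespace Matrix.PosSemidef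

open scoped ComplexOrder

/-- The positive semidefinite square root of a positive semidefinite matrix
(the definition removed from Mathlib, restored with its old meaning) -/
noncomputable def sqrt {n 𝕜 : Type*} [Fintype n] [RCLike 𝕜] [DecidableEq n]
    {A : Matrix n n 𝕜} (hA : A.PosSemidef) : Matrix n n 𝕜 :=
  hA.1.eigenvectorUnitary.1 * diagonal ((↑) ∘ (√·) ∘ hA.1.eigenvalues) *
    (star hA.1.eigenvectorUnitary : Matrix n n 𝕜)

end Matrix.PosSemidef

lemma transposeMulMul_posSemidef {n s : ℕ} {G : Matrix (Fin n) (Fin n) ℝ}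
    (hG : G.PosSemidef) (H : Matrix (Fin n) (Fin s) ℝ) : (Hᵀ * G * H).PosSemidef := by
  simpa [Matrix.conjTranspose_eq_transpose_of_trivial] using hG.conjTranspose_mul_mul_same H

section sqrtLemmas

open scoped MatrixOrder

private lemma psd_sqrt_eq_cfc {m : ℕ} {A : Matrix (Fin m) (Fin m) ℝ} (hA : A.PosSemidef) :
    hA.sqrt = CFC.sqrt A := by
  rw [CFC.sqrt_eq_cfc, cfc_nnreal_eq_real _ A hA.nonneg, hA.1.cfc_eq]
  simp [Matrix.IsHermitian.cfc, Matrix.PosSemidef.sqrt, Function.comp_def,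
    max_eq_left (hA.eigenvalues_nonneg _)]

private lemma psd_posSemidef_sqrt {m : ℕ} {A : Matrix (Fin m) (Fin m) ℝ} (hA : A.PosSemidef) :
    hA.sqrt.PosSemidef := by
  rw [psd_sqrt_eq_cfc]; exact Matrix.nonneg_iff_posSemidef.mp (CFC.sqrt_nonneg A)

private lemma psd_sqrt_mul_self {m : ℕ} {A : Matrix (Fin m) (Fin m) ℝ} (hA : A.PosSemidef) :
    hA.sqrt * hA.sqrt = A := by
  rw [psd_sqrt_eq_cfc]; exact CFC.sqrt_mul_sqrt_self A hA.nonneg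

private lemma psd_eq_sqrt_of_sq_eq {m : ℕ} {A B : Matrix (Fin m) (Fin m) ℝ} (hA : A.PosSemidef)
    (hB : B.PosSemidef) (h : A ^ 2 = B) : A = hB.sqrt := by
  rw [psd_sqrt_eq_cfc, eq_comm, CFC.sqrt_eq_iff _ _ hB.nonneg hA.nonneg, ← h, sq]

end sqrtLemmas

private lemma psd_diag_nonneg {m : ℕ} {P : Matrix (Fin m) (Fin m) ℝ} (hP : P.PosSemidef)
    (i : Fin m) : 0 ≤ P i i := by
  have := hP.2 (Finsupp.single i 1)
  simpa [Matrix.mulVec_single, single_dotProduct] using this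

private lemma trace_psd_nonneg {m : ℕ} {P : Matrix (Fin m) (Fin m) ℝ} (hP : P.PosSemidef) :
    0 ≤ P.trace := by
  rw [Matrix.trace]
  exact Finset.sum_nonneg fun i _ => psd_diag_nonneg hP i

private lemma diag_le_one {m : ℕ} {P : Matrix (Fin m) (Fin m) ℝ} (hP : P.PosSemidef)
    (hP2 : (P - P * P).PosSemidef) (i : Fin m) : P i i ≤ 1 := by
  have hsym : ∀ a b, P a b = P b a := by
    intro a b
    have h := hP.1
    rw [Matrix.IsHermitian, Matrix.conjTranspose_eq_transpose_of_trivial] at h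
    conv_lhs => rw [← h]
    rfl
  have h0 : 0 ≤ P i i := psd_diag_nonneg hP i
  have h2 : (P * P) i i ≤ P i i := by
    have := psd_diag_nonneg hP2 i
    have hsub : (P - P * P) i i = P i i - (P * P) i i := rfl
    rw [hsub] at this; linarith
  have hcs : (P i i) ^ 2 ≤ (P * P) i i := by
    have := Finset.sum_mul_sq_le_sq_mul_sq Finset.univ (fun j => if j = i then (1:ℝ) else 0)
      (fun j => P j i)
    simp only [ite_mul, one_mul, zero_mul, Finset.sum_ite_eq', Finset.mem_univ, if_true] at this
    have hPP : (P * P) i i = ∑ j, (P j i) ^ 2 := by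
      rw [Matrix.mul_apply]
      exact Finset.sum_congr rfl fun j _ => by rw [hsym i j]; ring
    have hone : (∑ j, (if j = i then (1:ℝ) else 0) ^ 2) = 1 := by simp
    rw [hone, one_mul] at this
    rw [hPP]
    exact this
  nlinarith

private lemma sum_lam_mul_le {n s : ℕ} (hs : s ≤ n) (lam w : Fin n → ℝ)
    (hdec : Antitone lam) (hnn : ∀ i, 0 ≤ lam i)
    (hw0 : ∀ i, 0 ≤ w i) (hw1 : ∀ i, w i ≤ 1) (hws : ∑ i, w i ≤ (s : ℝ)) :
    ∑ i, lam i * w i ≤ ∑ j : Fin s, lam (Fin.castLE hs j) := by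
  classical
  set B : Finset (Fin n) := Finset.univ.map ⟨Fin.castLE hs, Fin.castLE_injective hs⟩ with hB
  have hmem : ∀ i : Fin n, i ∈ B ↔ (i : ℕ) < s := by
    intro i
    simp only [hB, Finset.mem_map, Finset.mem_univ, true_and, Function.Embedding.coeFn_mk]
    constructor
    · rintro ⟨j, rfl⟩; exact j.isLt
    · intro h; exact ⟨⟨(i : ℕ), h⟩, by ext; simp⟩
  have hcard : (B.card : ℝ) = s := by simp [hB]
  have htarget : ∑ j : Fin s, lam (Fin.castLE hs j) = ∑ i ∈ B, lam i := by
    rw [hB, Finset.sum_map]; rfl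
  set c : ℝ := if h : s < n then lam ⟨s, h⟩ else 0 with hc
  have hc0 : 0 ≤ c := by
    rw [hc]; split
    · exact hnn _
    · exact le_refl 0
  have hcl : ∀ i ∈ B, c ≤ lam i := by
    intro i hi
    have his : (i : ℕ) < s := (hmem i).mp hi
    rw [hc]
    split
    · exact hdec (by rw [Fin.le_def]; exact le_of_lt his)
    · exact hnn i
  have hcu : ∀ i ∈ Bᶜ, lam i ≤ c := by
    intro i hi
    have his : s ≤ (i : ℕ) := by
      have := (hmem i).not.mp (Finset.mem_compl.mp hi); omega
    have hsn : s < n := lt_of_le_of_lt his i.isLt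
    rw [hc, dif_pos hsn]
    exact hdec (by rw [Fin.le_def]; exact his)
  have step1 : ∑ i ∈ B, lam i * w i ≤ ∑ i ∈ B, (lam i + c * (w i - 1)) := by
    refine Finset.sum_le_sum fun i hi => ?_
    have h1 : lam i * (w i - 1) ≤ c * (w i - 1) :=
      mul_le_mul_of_nonpos_right (hcl i hi) (by linarith [hw1 i])
    nlinarith
  have step2 : ∑ i ∈ Bᶜ, lam i * w i ≤ ∑ i ∈ Bᶜ, c * w i := by
    refine Finset.sum_le_sum fun i hi => ?_
    exact mul_le_mul_of_nonneg_right (hcu i hi) (hw0 i)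
  have hsplitw : ∑ i ∈ B, w i + ∑ i ∈ Bᶜ, w i = ∑ i, w i := Finset.sum_add_sum_compl B w
  have hsplit : ∑ i, lam i * w i = ∑ i ∈ B, lam i * w i + ∑ i ∈ Bᶜ, lam i * w i :=
    (Finset.sum_add_sum_compl B _).symm
  have expand : ∑ i ∈ B, (lam i + c * (w i - 1)) + ∑ i ∈ Bᶜ, c * w i
      = ∑ i ∈ B, lam i + c * ((∑ i ∈ B, w i + ∑ i ∈ Bᶜ, w i) - B.card) := by
    rw [Finset.sum_add_distrib, ← Finset.mul_sum, ← Finset.mul_sum, Finset.sum_sub_distrib,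
      Finset.sum_const, nsmul_eq_mul, mul_one]
    ring
  have hfin : c * ((∑ i ∈ B, w i + ∑ i ∈ Bᶜ, w i) - B.card) ≤ 0 := by
    apply mul_nonpos_of_nonneg_of_nonpos hc0
    rw [hsplitw, hcard]; linarith
  rw [htarget, hsplit]
  calc ∑ i ∈ B, lam i * w i + ∑ i ∈ Bᶜ, lam i * w i
      ≤ ∑ i ∈ B, (lam i + c * (w i - 1)) + ∑ i ∈ Bᶜ, c * w i := add_le_add step1 step2
    _ = ∑ i ∈ B, lam i + c * ((∑ i ∈ B, w i + ∑ i ∈ Bᶜ, w i) - B.card) := expand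
    _ ≤ ∑ i ∈ B, lam i := by linarith

private lemma kpca_lower_bound {n s : ℕ} (hs : s ≤ n)
    {G : Matrix (Fin n) (Fin n) ℝ} (hG : G.PosSemidef)
    (U : Matrix (Fin n) (Fin n) ℝ) (lam : Fin n → ℝ)
    (hUU : Uᵀ * U = 1) (hGdec : G = Uᵀ * Matrix.diagonal lam * U)
    (hdec : Antitone lam) (hnn : ∀ i, 0 ≤ lam i)
    (H : Matrix (Fin n) (Fin s) ℝ) :
    -(1 / 2) * ∑ j : Fin s, lam (Fin.castLE hs j)
      ≤ (1 / 2) * (Hᵀ * H).trace - (transposeMulMul_posSemidef hG H).sqrt.trace := by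
  classical
  set A := hG.sqrt with hAdef
  have hApsd := psd_posSemidef_sqrt hG
  have hAsym : Aᵀ = A := by
    rw [← Matrix.conjTranspose_eq_transpose_of_trivial]; exact hApsd.1
  have hAA : A * A = G := psd_sqrt_mul_self hG
  have hM := transposeMulMul_posSemidef hG H
  set M := Hᵀ * G * H with hMdef
  set herm := hM.1 with hherm
  set V : Matrix (Fin s) (Fin s) ℝ := herm.eigenvectorUnitary.1 with hVdef
  set μ := herm.eigenvalues with hmu
  have hmu0 : ∀ j, 0 ≤ μ j := fun j => hM.eigenvalues_nonneg j
  have hstar : (star herm.eigenvectorUnitary.1 : Matrix (Fin s) (Fin s) ℝ) = Vᵀ := by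
    rw [Matrix.star_eq_conjTranspose, Matrix.conjTranspose_eq_transpose_of_trivial]
  have hV1 : Vᵀ * V = 1 := by
    rw [← hstar]; exact Matrix.UnitaryGroup.star_mul_self herm.eigenvectorUnitary
  have hV2 : V * Vᵀ = 1 := by
    rw [← hstar]; exact herm.eigenvectorUnitary.2.2
  have hofReal : (RCLike.ofReal ∘ μ : Fin s → ℝ) = μ := by
    funext j; simp
  have hspec : M = V * Matrix.diagonal μ * Vᵀ := by
    conv_lhs => rw [herm.spectral_theorem]
    rw [Unitary.conjStarAlgAut_apply]
    rw [hstar, hofReal]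
  have hsqrt_def : hM.sqrt = V * Matrix.diagonal (fun j => Real.sqrt (μ j)) * Vᵀ := by
    rw [Matrix.PosSemidef.sqrt, hstar]
    congr 1
  -- cancellation helpers
  have cV : ∀ {m : ℕ} (X : Matrix (Fin s) (Fin m) ℝ), Vᵀ * (V * X) = X := by
    intro m X; rw [← Matrix.mul_assoc, hV1, Matrix.one_mul]
  have cU : ∀ {m : ℕ} (X : Matrix (Fin n) (Fin m) ℝ), Uᵀ * (U * X) = X := by
    intro m X; rw [← Matrix.mul_assoc, hUU, Matrix.one_mul]
  have cA : ∀ {m : ℕ} (X : Matrix (Fin n) (Fin m) ℝ), A * (A * X) = G * X := by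
    intro m X; rw [← Matrix.mul_assoc, hAA]
  have cM : ∀ {m : ℕ} (X : Matrix (Fin s) (Fin m) ℝ), Hᵀ * (G * (H * X)) = M * X := by
    intro m X; rw [hMdef]; simp only [Matrix.mul_assoc]
  -- the diagonal data
  set E : Matrix (Fin s) (Fin s) ℝ :=
    Matrix.diagonal (fun j => if μ j = 0 then 0 else (Real.sqrt (μ j))⁻¹) with hE
  set d : Fin s → ℝ := fun j => if μ j = 0 then 0 else 1 with hd
  have hEs : E * Matrix.diagonal μ = Matrix.diagonal (fun j => Real.sqrt (μ j)) := by
    rw [hE, Matrix.diagonal_mul_diagonal]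
    have hfun : (fun j => (if μ j = 0 then (0:ℝ) else (Real.sqrt (μ j))⁻¹) * μ j)
        = fun j => Real.sqrt (μ j) := by
      funext j
      by_cases h : μ j = 0
      · simp [h]
      · have hpos : 0 < μ j := lt_of_le_of_ne (hmu0 j) (Ne.symm h)
        have hsq : Real.sqrt (μ j) * Real.sqrt (μ j) = μ j := Real.mul_self_sqrt (hmu0 j)
        have hsnz : Real.sqrt (μ j) ≠ 0 := by positivity
        rw [if_neg h]
        field_simp
        rw [sq, hsq]
    rw [hfun]
  have hEd : E * Matrix.diagonal μ * E = Matrix.diagonal d := by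
    rw [hEs, hE, Matrix.diagonal_mul_diagonal]
    have hfun : (fun j => Real.sqrt (μ j) * (if μ j = 0 then (0:ℝ) else (Real.sqrt (μ j))⁻¹))
        = d := by
      rw [hd]
      funext j
      by_cases h : μ j = 0
      · simp [h]
      · have hpos : 0 < μ j := lt_of_le_of_ne (hmu0 j) (Ne.symm h)
        have hsnz : Real.sqrt (μ j) ≠ 0 := by positivity
        simp only [if_neg h]
        field_simp
    rw [hfun]
  set N : Matrix (Fin s) (Fin s) ℝ := V * E * Vᵀ with hN
  set Q : Matrix (Fin n) (Fin s) ℝ := A * (H * N) with hQ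
  set R : Matrix (Fin n) (Fin s) ℝ := U * (A * (H * (V * E))) with hR
  set P : Matrix (Fin n) (Fin n) ℝ := R * Rᵀ with hP
  have hEsym : Eᵀ = E := Matrix.diagonal_transpose _
  -- trace of sqrt
  have htr_sqrt : hM.sqrt.trace = ∑ j, Real.sqrt (μ j) := by
    rw [hsqrt_def, Matrix.trace_mul_cycle, hV1, Matrix.one_mul, Matrix.trace_diagonal]
  -- trace (Qᵀ * (A * H)) = same
  have hNM : N * M = V * (E * Matrix.diagonal μ) * Vᵀ := by
    rw [hN, hspec]
    simp only [Matrix.mul_assoc]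
    rw [cV (Matrix.diagonal μ * Vᵀ)]
  have htrNM : (N * M).trace = ∑ j, Real.sqrt (μ j) := by
    rw [hNM, Matrix.trace_mul_cycle, hV1, Matrix.one_mul, hEs, Matrix.trace_diagonal]
  have hQAH : Qᵀ * (A * H) = N * M := by
    rw [hQ, hN]
    simp only [Matrix.transpose_mul, Matrix.mul_assoc, hEsym, Matrix.transpose_transpose]
    rw [hAsym]
    rw [show A * (A * H) = G * H from cA H]
    rw [hMdef]
    simp only [Matrix.mul_assoc]
  have htrQAH : (Qᵀ * (A * H)).trace = ∑ j, Real.sqrt (μ j) := by rw [hQAH, htrNM]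
  -- the square trick
  have hkey : 2 * (Qᵀ * (A * H)).trace ≤ (Hᵀ * H).trace + (Qᵀ * (G * Q)).trace := by
    set Z := H - A * Q with hZ
    have hZpsd : (Zᵀ * Z).PosSemidef := by
      simpa [Matrix.conjTranspose_eq_transpose_of_trivial] using
        Matrix.posSemidef_conjTranspose_mul_self Z
    have h0 := trace_psd_nonneg hZpsd
    have hexpand : Zᵀ * Z = Hᵀ * H - Hᵀ * (A * Q) - Qᵀ * (A * H) + Qᵀ * (G * Q) := by
      rw [hZ]
      simp only [Matrix.transpose_sub, Matrix.transpose_mul, Matrix.sub_mul, Matrix.mul_sub,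
        hAsym, Matrix.mul_assoc]
      rw [show A * (A * Q) = G * Q from cA Q]
      abel
    have htt : (Hᵀ * (A * Q)).trace = (Qᵀ * (A * H)).trace := by
      rw [← Matrix.trace_transpose (Hᵀ * (A * Q))]
      simp only [Matrix.transpose_mul, Matrix.transpose_transpose, hAsym, Matrix.mul_assoc]
    rw [hexpand] at h0
    simp only [Matrix.trace_sub, Matrix.trace_add] at h0
    linarith [htt ▸ h0]
  -- R facts
  have hRR : Rᵀ * R = Matrix.diagonal d := by
    rw [hR]
    simp only [Matrix.transpose_mul, Matrix.mul_assoc, hEsym, Matrix.transpose_transpose]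
    rw [hAsym]
    rw [show Uᵀ * (U * (A * (H * (V * E)))) = A * (H * (V * E)) from cU _]
    rw [show A * (A * (H * (V * E))) = G * (H * (V * E)) from cA _]
    rw [show Hᵀ * (G * (H * (V * E))) = M * (V * E) from cM _]
    rw [hspec]
    simp only [Matrix.mul_assoc]
    rw [cV (Matrix.diagonal μ * (Vᵀ * (V * E))), cV E, ← Matrix.mul_assoc]
    exact hEd
  have hPpsd : P.PosSemidef := by
    rw [hP]
    simpa [Matrix.conjTranspose_eq_transpose_of_trivial] using
      Matrix.posSemidef_self_mul_conjTranspose R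
  have hd01 : ∀ j, 0 ≤ d j ∧ d j ≤ 1 := by
    intro j; rw [hd]; by_cases h : μ j = 0 <;> simp [h]
  have hPsub : (P - P * P).PosSemidef := by
    have hdpsd : (Matrix.diagonal (fun j => 1 - d j)).PosSemidef :=
      Matrix.PosSemidef.diagonal (fun j => by
        simp only [Pi.zero_apply]; linarith [(hd01 j).2])
    have h1 : (R * Matrix.diagonal (fun j => 1 - d j) * Rᵀ).PosSemidef := by
      simpa [Matrix.conjTranspose_eq_transpose_of_trivial] using
        hdpsd.mul_mul_conjTranspose_same R
    have h2 : R * Matrix.diagonal (fun j => 1 - d j) * Rᵀ = P - P * P := by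
      have hsub : Matrix.diagonal (fun j => 1 - d j) = 1 - Matrix.diagonal d := by
        rw [← Matrix.diagonal_one, ← Matrix.diagonal_sub]
      rw [hsub, Matrix.mul_sub, Matrix.mul_one, Matrix.sub_mul, hP]
      congr 1
      rw [show P * P = R * (Rᵀ * R) * Rᵀ from by rw [hP]; simp only [Matrix.mul_assoc], hRR,
        Matrix.mul_assoc]
    rw [← h2]; exact h1
  have htrP : ∑ i, P i i ≤ (s : ℝ) := by
    have h1 : ∑ i, P i i = P.trace := rfl
    have h2 : P.trace = (Rᵀ * R).trace := by rw [hP, Matrix.trace_mul_comm]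
    have h3 : (Rᵀ * R).trace = ∑ j, d j := by rw [hRR, Matrix.trace_diagonal]
    have h4 : ∑ j : Fin s, d j ≤ (s : ℝ) := by
      calc ∑ j : Fin s, d j ≤ ∑ _j : Fin s, (1 : ℝ) :=
            Finset.sum_le_sum fun j _ => (hd01 j).2
        _ = s := by simp
    rw [h1, h2, h3]; exact h4
  -- trace (Qᵀ G Q) = ∑ lam i * P i i
  have hUQ : U * Q = R * Vᵀ := by
    rw [hQ, hR, hN]
    simp only [Matrix.mul_assoc]
  have hQGQ : (Qᵀ * (G * Q)).trace = ∑ i, lam i * P i i := by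
    have h1 : Qᵀ * (G * Q) = (U * Q)ᵀ * (Matrix.diagonal lam * (U * Q)) := by
      conv_lhs => rw [hGdec]
      simp only [Matrix.transpose_mul, Matrix.mul_assoc]
    have h2 : (U * Q) * (U * Q)ᵀ = P := by
      rw [hUQ, hP]
      simp only [Matrix.transpose_mul, Matrix.transpose_transpose, Matrix.mul_assoc]
      rw [cV Rᵀ]
    rw [h1, Matrix.trace_mul_comm ((U * Q)ᵀ) (Matrix.diagonal lam * (U * Q)),
      Matrix.mul_assoc, h2]
    simp [Matrix.trace, Matrix.diag, Matrix.diagonal_mul]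
  -- put it together
  have hsum : ∑ i, lam i * P i i ≤ ∑ j : Fin s, lam (Fin.castLE hs j) :=
    sum_lam_mul_le hs lam (fun i => P i i) hdec hnn
      (fun i => psd_diag_nonneg hPpsd i) (fun i => diag_le_one hPpsd hPsub i) htrP
  have hsum' : (Qᵀ * (G * Q)).trace ≤ ∑ j : Fin s, lam (Fin.castLE hs j) := by
    rw [hQGQ]; exact hsum
  have htr_sqrt' : (transposeMulMul_posSemidef hG H).sqrt.trace = ∑ j, Real.sqrt (μ j) :=
    htr_sqrt
  rw [htr_sqrt']
  linarith [hkey, hsum', htrQAH]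

private lemma kpca_attained {n s : ℕ} (hs : s ≤ n)
    {G : Matrix (Fin n) (Fin n) ℝ} (hG : G.PosSemidef)
    (u : Fin n → (Fin n → ℝ)) (lam : Fin n → ℝ)
    (horth : ∀ i k : Fin n, u i ⬝ᵥ u k = if i = k then (1 : ℝ) else 0)
    (heig : ∀ i : Fin n, G *ᵥ u i = lam i • u i)
    (hnn : ∀ i : Fin n, 0 ≤ lam i)
    (Hsvd : Matrix (Fin n) (Fin s) ℝ)
    (hHsvd : Hsvd = Matrix.of fun i j =>
      Real.sqrt (lam (Fin.castLE hs j)) * u (Fin.castLE hs j) i) :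
    (1 / 2) * (Hsvdᵀ * Hsvd).trace - (transposeMulMul_posSemidef hG Hsvd).sqrt.trace
      = -(1 / 2) * ∑ j : Fin s, lam (Fin.castLE hs j) := by
  classical
  have hHtH : Hsvdᵀ * Hsvd = Matrix.diagonal (fun j => lam (Fin.castLE hs j)) := by
    ext j k
    rw [Matrix.mul_apply]
    simp only [hHsvd, Matrix.transpose_apply, Matrix.of_apply]
    have h1 : ∑ i, (Real.sqrt (lam (Fin.castLE hs j)) * u (Fin.castLE hs j) i) *
        (Real.sqrt (lam (Fin.castLE hs k)) * u (Fin.castLE hs k) i)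
        = Real.sqrt (lam (Fin.castLE hs j)) * Real.sqrt (lam (Fin.castLE hs k)) *
          ∑ i, u (Fin.castLE hs j) i * u (Fin.castLE hs k) i := by
      rw [Finset.mul_sum]
      exact Finset.sum_congr rfl fun i _ => by ring
    have h2 := horth (Fin.castLE hs j) (Fin.castLE hs k)
    rw [dotProduct] at h2
    rw [h1, h2]
    by_cases hjk : j = k
    · subst hjk
      rw [if_pos rfl, Matrix.diagonal_apply_eq, mul_one,
        Real.mul_self_sqrt (hnn (Fin.castLE hs j))]
    · have : Fin.castLE hs j ≠ Fin.castLE hs k := fun h => hjk (Fin.castLE_injective hs h)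
      rw [if_neg this, Matrix.diagonal_apply_ne _ hjk, mul_zero]
  have hGH : G * Hsvd = Hsvd * Matrix.diagonal (fun j => lam (Fin.castLE hs j)) := by
    ext i j
    rw [Matrix.mul_apply, Matrix.mul_diagonal]
    simp only [hHsvd, Matrix.of_apply]
    have h := congrFun (heig (Fin.castLE hs j)) i
    rw [Matrix.mulVec, dotProduct] at h
    simp only [Pi.smul_apply, smul_eq_mul] at h
    calc ∑ y, G i y * (Real.sqrt (lam (Fin.castLE hs j)) * u (Fin.castLE hs j) y)
        = Real.sqrt (lam (Fin.castLE hs j)) * ∑ y, G i y * u (Fin.castLE hs j) y := by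
          rw [Finset.mul_sum]; exact Finset.sum_congr rfl fun y _ => by ring
      _ = Real.sqrt (lam (Fin.castLE hs j)) * (lam (Fin.castLE hs j) * u (Fin.castLE hs j) i) := by
          rw [h]
      _ = Real.sqrt (lam (Fin.castLE hs j)) * u (Fin.castLE hs j) i * lam (Fin.castLE hs j) := by
          ring
  have hHGH : Hsvdᵀ * G * Hsvd = Matrix.diagonal (fun j => (lam (Fin.castLE hs j)) ^ 2) := by
    rw [Matrix.mul_assoc, hGH, ← Matrix.mul_assoc, hHtH, Matrix.diagonal_mul_diagonal]
    congr 1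
    funext j
    ring
  have hdpsd : (Matrix.diagonal (fun j => lam (Fin.castLE hs j))).PosSemidef :=
    Matrix.PosSemidef.diagonal (fun j => by simp only [Pi.zero_apply]; exact hnn _)
  have hsq : (Matrix.diagonal (fun j => lam (Fin.castLE hs j))) ^ 2 = Hsvdᵀ * G * Hsvd := by
    rw [pow_two, Matrix.diagonal_mul_diagonal, hHGH]
    congr 1
    funext j
    ring
  have hsqrt : (transposeMulMul_posSemidef hG Hsvd).sqrt
      = Matrix.diagonal (fun j => lam (Fin.castLE hs j)) :=
    (psd_eq_sqrt_of_sq_eq hdpsd (transposeMulMul_posSemidef hG Hsvd) hsq).symm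
  rw [hHtH, hsqrt, Matrix.trace_diagonal]
  ring

/-- The infimum of the dual KPCA objective `(1/2)Tr(HᵀH) - Tr√(HᵀGH)` over `H ∈ ℝ^{n×s}`
is `-(1/2) Σ_{i=1}^s λᵢ` (the `s` largest eigenvalues of `G`), attained at `H^svd`,
whose `j`-th column is `√λⱼ uⱼ`. -/
theorem dual_kpca_infimum {n s : ℕ} (hs : s ≤ n)
    {G : Matrix (Fin n) (Fin n) ℝ} (hG : G.PosSemidef)
    (u : Fin n → (Fin n → ℝ)) (lam : Fin n → ℝ)
    (horth : ∀ i k : Fin n, u i ⬝ᵥ u k = if i = k then (1 : ℝ) else 0)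
    (heig : ∀ i : Fin n, G *ᵥ u i = lam i • u i)
    (hdec : Antitone lam) (hnn : ∀ i : Fin n, 0 ≤ lam i)
    (Hsvd : Matrix (Fin n) (Fin s) ℝ)
    (hHsvd : Hsvd = Matrix.of fun i j =>
      Real.sqrt (lam (Fin.castLE hs j)) * u (Fin.castLE hs j) i) :
    (⨅ H : Matrix (Fin n) (Fin s) ℝ,
        ((1 / 2) * (Hᵀ * H).trace - (transposeMulMul_posSemidef hG H).sqrt.trace))
      = -(1 / 2) * ∑ j : Fin s, lam (Fin.castLE hs j) ∧
    (1 / 2) * (Hsvdᵀ * Hsvd).trace - (transposeMulMul_posSemidef hG Hsvd).sqrt.trace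
      = -(1 / 2) * ∑ j : Fin s, lam (Fin.castLE hs j) := by
  classical
  set U : Matrix (Fin n) (Fin n) ℝ := Matrix.of (fun i j => u i j) with hU
  have hUUT : U * Uᵀ = 1 := by
    ext i k
    rw [Matrix.mul_apply]
    have := horth i k
    rw [dotProduct] at this
    simp only [hU, Matrix.transpose_apply, Matrix.of_apply]
    rw [this, Matrix.one_apply]
  have hUU : Uᵀ * U = 1 := mul_eq_one_comm.mp hUUT
  have hGU : G * Uᵀ = Uᵀ * Matrix.diagonal lam := by
    ext x i
    rw [Matrix.mul_apply, Matrix.mul_diagonal]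
    simp only [hU, Matrix.transpose_apply, Matrix.of_apply]
    have h := congrFun (heig i) x
    rw [Matrix.mulVec, dotProduct] at h
    simp only [Pi.smul_apply, smul_eq_mul] at h
    rw [h]; ring
  have hGdec : G = Uᵀ * Matrix.diagonal lam * U := by
    calc G = G * 1 := by rw [Matrix.mul_one]
      _ = G * (Uᵀ * U) := by rw [hUU]
      _ = G * Uᵀ * U := by rw [Matrix.mul_assoc]
      _ = Uᵀ * Matrix.diagonal lam * U := by rw [hGU]
  have lower := fun H : Matrix (Fin n) (Fin s) ℝ =>
    kpca_lower_bound hs hG U lam hUU hGdec hdec hnn H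
  have attained := kpca_attained hs hG u lam horth heig hnn Hsvd hHsvd
  refine ⟨le_antisymm ?_ (le_ciInf lower), attained⟩
  have hbdd : BddBelow (Set.range fun H : Matrix (Fin n) (Fin s) ℝ =>
      (1 / 2) * (Hᵀ * H).trace - (transposeMulMul_posSemidef hG H).sqrt.trace) := by
    refine ⟨-(1 / 2) * ∑ j : Fin s, lam (Fin.castLE hs j), ?_⟩
    rintro x ⟨H, rfl⟩
    exact lower H
  exact (ciInf_le hbdd Hsvd).trans attained.le
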